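/- Every complex number is an eigenvalue of T: σ(T) = σ_p(T) = ℂ. Concretely, for any λ ∈ ℂ and any nonzero y ∈ L^p(0,a), the function x(t) = λ^n · y(t−na) / ∏_{i=1}^{n} w(t−ia) for t ∈ [na,(n+1)a) lies in L^p(0,∞) ∖ {0}, belongs to D(T), and satisfies Tx = λx. -/

import Mathlib

open MeasureTheory Filter Set
open scoped ENNReal NNReal

lemma aux_floor_eq (a : ℝ) (ha : 0 < a) (n : ℕ) (t : ℝ)
    (h1 : (n:ℝ)*a ≤ t) (h2 : t < ((n:ℝ)+1)*a) : (⌊t / a⌋).toNat = n := by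
  have : ⌊t / a⌋ = (n : ℤ) := by
    rw [Int.floor_eq_iff]
    constructor
    · push_cast; rw [le_div_iff₀ ha]; linarith
    · push_cast; rw [div_lt_iff₀ ha]; linarith
  simp [this]

lemma aux_mem_block (a : ℝ) (ha : 0 < a) (t : ℝ) (ht : 0 ≤ t) :
    (((⌊t / a⌋).toNat : ℝ))*a ≤ t ∧ t < (((⌊t / a⌋).toNat : ℝ)+1)*a := by
  have hm0 : 0 ≤ ⌊t / a⌋ := Int.floor_nonneg.2 (div_nonneg ht ha.le)
  have hcast : ((⌊t / a⌋.toNat : ℝ)) = ((⌊t / a⌋ : ℤ) : ℝ) := by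
    exact_mod_cast Int.toNat_of_nonneg hm0
  constructor
  · rw [hcast]
    have := Int.floor_le (t / a)
    calc ((⌊t / a⌋ : ℤ) : ℝ) * a ≤ (t/a) * a := by nlinarith
      _ = t := by field_simp
  · rw [hcast]
    have := Int.lt_floor_add_one (t / a)
    have h2 : t / a * a < (((⌊t / a⌋ : ℤ) : ℝ) + 1) * a := by nlinarith
    calc t = t / a * a := by field_simp
      _ < _ := h2

lemma aux_prod_split (w : ℝ → ℂ) (a t : ℝ) (n : ℕ) :
    ∏ i ∈ Finset.Icc 1 (n+1), w (t + a - (i:ℝ)*a)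
      = w t * ∏ i ∈ Finset.Icc 1 n, w (t - (i:ℝ)*a) := by
  have h1 : Finset.Icc 1 (n+1) = (Finset.Icc 0 n).map (addRightEmbedding 1) := by
    rw [Finset.map_add_right_Icc]
  rw [h1, Finset.prod_map]
  have h2 : ∀ j ∈ Finset.Icc 0 n, w (t + a - ((addRightEmbedding 1 j : ℕ):ℝ)*a)
      = w (t - (j:ℝ)*a) := by
    intro j _
    congr 1
    simp [addRightEmbedding]
    push_cast
    ring
  rw [Finset.prod_congr rfl h2]
  have h3 : Finset.Icc 0 n = insert 0 (Finset.Icc 1 n) := by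
    ext i; simp [Finset.mem_Icc]; omega
  rw [h3, Finset.prod_insert (by simp)]
  simp

/-- for the unbounded operator `(Tx)(t) = w(t)x(t+a)` on the complex
space `L^p(0,∞)` (with `|w(t)| ≥ b > 1` and `|w(t)| → ∞`), every `λ ∈ ℂ` is an
eigenvalue (so `σ(T) = σ_p(T) = ℂ`): for any nonzero `y ∈ L^p(0,a)` the function
`x(t) = λ^n y(t−na)/∏_{i=1}^n w(t−ia)` on `[na,(n+1)a)` is a nonzero element of
`L^p(0,∞)` lying in `D(T)` and satisfying `Tx = λx`. -/
theorem stmt12 (p : ENNReal) [Fact (1 ≤ p)] (hp : p ≠ ⊤) (a : ℝ) (ha : 0 < a)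
    (w : ℝ → ℂ) (hw : Measurable w) (b : ℝ) (hb : 1 < b)
    (hwb : ∀ t : ℝ, b ≤ ‖w t‖)
    (htend : Tendsto (fun t => ‖w t‖) atTop atTop)
    (l : ℂ)
    (y : ℝ → ℂ) (hy : MemLp y p (volume.restrict (Set.Ioo (0:ℝ) a)))
    (hy0 : ¬ y =ᵐ[volume.restrict (Set.Ioo (0:ℝ) a)] 0)
    (x : ℝ → ℂ)
    (hx : ∀ t : ℝ, 0 ≤ t →
      x t = l ^ (⌊t / a⌋).toNat * y (t - (⌊t / a⌋).toNat * a) /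
        ∏ i ∈ Finset.Icc 1 (⌊t / a⌋).toNat, w (t - i * a)) :
    MemLp x p (volume.restrict (Set.Ioi (0:ℝ))) ∧
      ¬ x =ᵐ[volume.restrict (Set.Ioi (0:ℝ))] 0 ∧
      MemLp (fun t => w t * x (t + a)) p (volume.restrict (Set.Ioi (0:ℝ))) ∧
      (fun t => w t * x (t + a)) =ᵐ[volume.restrict (Set.Ioi (0:ℝ))]
        fun t => l * x t := by
  have hp1 : (1:ENNReal) ≤ p := Fact.out
  have hp0 : p ≠ 0 := by intro h; rw [h] at hp1; simp at hp1
  have hw0 : ∀ t, w t ≠ 0 := by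
    intro t h
    have := hwb t
    rw [h] at this; simp at this; linarith
  -- pointwise eigen-equation on t ≥ 0
  have heig : ∀ t : ℝ, 0 ≤ t → w t * x (t + a) = l * x t := by
    intro t ht
    have hta : (0:ℝ) ≤ t + a := by linarith
    have hfl : ⌊(t + a) / a⌋ = ⌊t / a⌋ + 1 := by
      rw [show (t + a)/a = t/a + 1 by field_simp]
      exact Int.floor_add_one _
    have hfl0 : 0 ≤ ⌊t / a⌋ := Int.floor_nonneg.2 (div_nonneg ht ha.le)
    have hfln : (⌊(t + a) / a⌋).toNat = ⌊t / a⌋.toNat + 1 := by rw [hfl]; omega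
    rw [hx (t + a) hta, hx t ht, hfln]
    set n := (⌊t / a⌋).toNat with hn
    clear_value n
    have hP := aux_prod_split w a t n
    have hPne : (∏ i ∈ Finset.Icc 1 n, w (t - (i:ℝ) * a)) ≠ 0 :=
      Finset.prod_ne_zero_iff.2 fun i _ => hw0 _
    have harg1 : ∀ i : ℕ, t + a - ((i:ℕ):ℝ) * a = t + a - (i:ℝ) * a := fun i => rfl
    push_cast
    rw [hP, show t + a - ((n:ℝ)+1) * a = t - (n:ℝ) * a by ring,
      ← mul_div_assoc, mul_div_mul_left _ _ (hw0 t)]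
    ring
  -- measurable representative of y
  obtain ⟨g, hgsm, hyg⟩ := hy.1
  have hg : Measurable g := hgsm.measurable
  set S : ℕ → Set ℝ := fun n => Ico ((n:ℝ)*a) (((n:ℝ)+1)*a) with hS
  set f : ℕ → ℝ → ℂ := fun n t =>
    l ^ n * g (t - (n:ℝ)*a) / ∏ i ∈ Finset.Icc 1 n, w (t - (i:ℝ)*a) with hf
  have hfm : ∀ n, Measurable (f n) := by
    intro n
    apply Measurable.div
    · exact measurable_const.mul (hg.comp (measurable_id.sub measurable_const))
    · exact Finset.measurable_prod _ fun i _ => hw.comp (measurable_id.sub measurable_const)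
  have hN : volume ({t : ℝ | ¬ y t = g t} ∩ Ioo 0 a) = 0 := by
    have h := hyg
    rw [Filter.EventuallyEq, ae_iff, Measure.restrict_apply' measurableSet_Ioo] at h
    exact h
  set B : ℕ → Set ℝ := fun n =>
    (fun t : ℝ => t - (n:ℝ)*a) ⁻¹' ({t : ℝ | ¬ y t = g t} ∩ Ioo 0 a) ∪ {(n:ℝ)*a} with hB
  have hBn : ∀ n : ℕ, volume (B n) = 0 := by
    intro n
    apply measure_union_null
    · have heq : (fun t : ℝ => t - (n:ℝ)*a) = (fun t : ℝ => t + (-((n:ℝ)*a))) := by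
        funext t; ring
      rw [heq, measure_preimage_add_right]
      exact hN
    · simp
  have hae : ∀ n : ℕ, x =ᵐ[volume.restrict (S n)] f n := by
    intro n
    have h1 : ∀ᵐ t ∂(volume.restrict (S n)), t ∉ B n := by
      rw [ae_iff, Measure.restrict_apply' measurableSet_Ico]
      refine measure_mono_null ?_ (hBn n)
      intro t ht
      simpa using ht.1
    filter_upwards [h1, ae_restrict_mem measurableSet_Ico] with t htB htS
    obtain ⟨hts, htn⟩ := htS
    have ht0 : (0:ℝ) ≤ t := le_trans (by positivity) hts
    rw [hx t ht0, aux_floor_eq a ha n t hts htn]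
    have hyg' : y (t - (n:ℝ)*a) = g (t - (n:ℝ)*a) := by
      by_contra hne
      rcases eq_or_lt_of_le hts with heq | hlt
      · exact htB (Or.inr (by simp [← heq]))
      · refine htB (Or.inl ?_)
        refine ⟨hne, ?_, ?_⟩
        · show (0:ℝ) < t - (n:ℝ)*a
          linarith
        · show t - (n:ℝ)*a < a
          linarith
    rw [hyg']
  -- x = y on (0,a)
  have hxy : ∀ t ∈ Ioo (0:ℝ) a, x t = y t := by
    intro t ht
    have h0 : (0:ℝ) ≤ t := ht.1.le
    rw [hx t h0, aux_floor_eq a ha 0 t (by simpa using h0) (by simpa using ht.2)]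
    simp
  have hnz : ¬ x =ᵐ[volume.restrict (Set.Ioi (0:ℝ))] 0 := by
    intro h
    apply hy0
    have h2 : x =ᵐ[volume.restrict (Ioo (0:ℝ) a)] 0 :=
      ae_restrict_of_ae_restrict_of_subset (fun t ht => ht.1) h
    have h3 : y =ᵐ[volume.restrict (Ioo (0:ℝ) a)] x := by
      filter_upwards [ae_restrict_mem measurableSet_Ioo] with t ht
      exact (hxy t ht).symm
    exact h3.trans h2
  have hsub : Ioi (0:ℝ) ⊆ ⋃ n : ℕ, S n := by
    intro t ht
    rcases aux_mem_block a ha t (le_of_lt ht) with ⟨h1, h2⟩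
    exact mem_iUnion.2 ⟨(⌊t/a⌋).toNat, h1, h2⟩
  have hmeasx : AEStronglyMeasurable x (volume.restrict (Ioi (0:ℝ))) := by
    have hx1 : AEStronglyMeasurable x (volume.restrict (⋃ n : ℕ, S n)) := by
      rw [aestronglyMeasurable_iUnion_iff]
      intro n
      exact ((hfm n).aestronglyMeasurable).congr (hae n).symm
    exact hx1.mono_measure (Measure.restrict_mono hsub le_rfl)
  -- constants
  set M : ℝ := 2*(‖l‖+1) with hM
  have hM2 : (2:ℝ) ≤ M := by nlinarith [norm_nonneg l]
  obtain ⟨R, hR⟩ := eventually_atTop.1 (htend.eventually_ge_atTop M)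
  set K : ℕ := ⌈R/a⌉₊ with hK
  have hKa : R ≤ (K:ℝ)*a := by
    have h := Nat.le_ceil (R/a)
    calc R = (R/a)*a := by field_simp
      _ ≤ (K:ℝ)*a := by nlinarith [Nat.le_ceil (R/a)]
  set Me : ℝ≥0∞ := ENNReal.ofReal M with hMe
  have hMetop : Me ≠ ⊤ := ENNReal.ofReal_ne_top
  have hMe1 : (1:ℝ≥0∞) ≤ Me := by
    rw [hMe, show (1:ℝ≥0∞) = ENNReal.ofReal 1 by simp]
    exact ENNReal.ofReal_le_ofReal (by linarith)
  have hLM : (‖l‖₊ : ℝ≥0∞) ≤ Me * 2⁻¹ := by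
    have h1 : Me = 2 * ENNReal.ofReal (‖l‖+1) := by
      rw [hMe, hM, ENNReal.ofReal_mul (by norm_num)]
      norm_num
    rw [h1, mul_comm 2 _, mul_assoc, ENNReal.mul_inv_cancel (by norm_num) (by norm_num),
      mul_one, ← ENNReal.ofReal_coe_nnreal, coe_nnnorm]
    exact ENNReal.ofReal_le_ofReal (by linarith)
  -- key pointwise bound
  have hkey : ∀ (n : ℕ) (t : ℝ), (n:ℝ)*a ≤ t →
      (‖f n t‖₊ : ℝ≥0∞) ≤ Me^K * (2⁻¹:ℝ≥0∞)^n * (‖g (t - (n:ℝ)*a)‖₊ : ℝ≥0∞) := by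
    intro n t hnt
    have hfac : ∀ i ∈ Finset.Icc 1 (n - K), Me ≤ (‖w (t - (i:ℝ)*a)‖₊ : ℝ≥0∞) := by
      intro i hi
      rw [Finset.mem_Icc] at hi
      have hiKn : i + K ≤ n := by omega
      have hreal : R ≤ t - (i:ℝ)*a := by
        have hcast : (i:ℝ) + (K:ℝ) ≤ (n:ℝ) := by exact_mod_cast hiKn
        nlinarith
      calc Me ≤ ENNReal.ofReal ‖w (t - (i:ℝ)*a)‖ := ENNReal.ofReal_le_ofReal (hR _ hreal)
        _ = _ := by rw [← ENNReal.ofReal_coe_nnreal, coe_nnnorm]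
    have hP1 : Me ^ (n - K) ≤ ∏ i ∈ Finset.Icc 1 (n - K), ((‖w (t - (i:ℝ)*a)‖₊ : ℝ≥0∞)) := by
      have hc := Finset.pow_card_le_prod (Finset.Icc 1 (n-K))
        (fun i => ((‖w (t - (i:ℝ)*a)‖₊ : ℝ≥0∞))) Me hfac
      rwa [Nat.card_Icc, show n - K + 1 - 1 = n - K from rfl] at hc
    have hP2 : (∏ i ∈ Finset.Icc 1 (n-K), ((‖w (t - (i:ℝ)*a)‖₊:ℝ≥0∞)))
        ≤ ∏ i ∈ Finset.Icc 1 n, ((‖w (t - (i:ℝ)*a)‖₊:ℝ≥0∞)) := by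
      apply Finset.prod_le_prod_of_subset_of_one_le'
        (Finset.Icc_subset_Icc_right (Nat.sub_le n K))
      intro i _ _
      have h1 : (1:ℝ) ≤ ‖w (t - (i:ℝ)*a)‖ := le_trans hb.le (hwb _)
      rw [← ENNReal.ofReal_coe_nnreal, coe_nnnorm]
      calc (1:ℝ≥0∞) = ENNReal.ofReal 1 := by simp
        _ ≤ _ := ENNReal.ofReal_le_ofReal h1
    have hPnn : (∏ i ∈ Finset.Icc 1 n, ‖w (t - (i:ℝ)*a)‖₊) ≠ 0 := by
      rw [Finset.prod_ne_zero_iff]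
      intro i _
      simp [nnnorm_ne_zero_iff, hw0]
    have hnorm : (‖f n t‖₊ : ℝ≥0∞)
        = (‖l‖₊:ℝ≥0∞)^n * (‖g (t - (n:ℝ)*a)‖₊:ℝ≥0∞)
          / ∏ i ∈ Finset.Icc 1 n, ((‖w (t - (i:ℝ)*a)‖₊:ℝ≥0∞)) := by
      rw [hf]
      simp only [nnnorm_div, nnnorm_mul, nnnorm_pow, nnnorm_prod]
      rw [ENNReal.coe_div hPnn, ENNReal.coe_mul, ENNReal.coe_pow, ENNReal.coe_finset_prod]
    rw [hnorm]
    set G : ℝ≥0∞ := (‖g (t - (n:ℝ)*a)‖₊ : ℝ≥0∞) with hG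
    have main : (‖l‖₊:ℝ≥0∞)^n * G ≤ (Me^K * (2⁻¹:ℝ≥0∞)^n * G) * Me^(n-K) := by
      calc (‖l‖₊:ℝ≥0∞)^n * G ≤ (Me * 2⁻¹)^n * G :=
            mul_le_mul_left (pow_le_pow_left' hLM n) G
        _ = Me^n * (2⁻¹:ℝ≥0∞)^n * G := by rw [mul_pow]
        _ ≤ Me^(K + (n-K)) * (2⁻¹:ℝ≥0∞)^n * G := by
            exact mul_le_mul_left (mul_le_mul_left
              (pow_le_pow_right' hMe1 (by omega)) _) G
        _ = (Me^K * (2⁻¹:ℝ≥0∞)^n * G) * Me^(n-K) := by rw [pow_add]; ring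
    calc (‖l‖₊:ℝ≥0∞)^n * G / ∏ i ∈ Finset.Icc 1 n, ((‖w (t - (i:ℝ)*a)‖₊:ℝ≥0∞))
        ≤ (‖l‖₊:ℝ≥0∞)^n * G / Me^(n-K) := ENNReal.div_le_div le_rfl (hP1.trans hP2)
      _ ≤ Me^K * (2⁻¹:ℝ≥0∞)^n * G := ENNReal.div_le_of_le_mul main
  -- integrability
  have hq : 0 < p.toReal := ENNReal.toReal_pos hp0 hp
  set q := p.toReal with hqdef
  set A : ℝ≥0∞ := ∫⁻ t in Ioo (0:ℝ) a, ((‖y t‖₊:ℝ≥0∞))^q with hA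
  have hAfin : A ≠ ⊤ := by
    have h := hy.2
    rw [eLpNorm_lt_top_iff_lintegral_rpow_enorm_lt_top hp0 hp] at h
    exact ne_of_lt h
  have hAg : (∫⁻ s in Ico (0:ℝ) a, ((‖g s‖₊:ℝ≥0∞))^q) = A := by
    rw [← Measure.restrict_congr_set Ioo_ae_eq_Ico, hA]
    apply lintegral_congr_ae
    filter_upwards [hyg] with t ht
    rw [ht]
  have htrans : ∀ n : ℕ, (∫⁻ t in S n, ((‖g (t - (n:ℝ)*a)‖₊:ℝ≥0∞))^q) = A := by
    intro n
    have hmp := measurePreserving_add_right (volume : Measure ℝ) ((n:ℝ)*a)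
    have hemb : MeasurableEmbedding (fun s : ℝ => s + (n:ℝ)*a) :=
      measurableEmbedding_addRight ((n:ℝ)*a)
    have h0 := hmp.setLIntegral_comp_preimage_emb hemb
      (fun v => ((‖g (v - (n:ℝ)*a)‖₊:ℝ≥0∞))^q) (S n)
    have hpre : (fun s : ℝ => s + (n:ℝ)*a) ⁻¹' (S n) = Ico (0:ℝ) a := by
      ext u
      simp only [hS, mem_preimage, mem_Ico]
      constructor
      · rintro ⟨h1', h2'⟩
        constructor <;> linarith
      · rintro ⟨h1', h2'⟩
        constructor <;> linarith
    rw [hpre] at h0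
    simp only [add_sub_cancel_right] at h0
    rw [← h0]
    exact hAg
  have hblock : ∀ n : ℕ, (∫⁻ t in S n, ((‖x t‖₊:ℝ≥0∞))^q)
      ≤ (((2⁻¹:ℝ≥0∞))^q)^n * ((Me^K)^q * A) := by
    intro n
    have he : (∫⁻ t in S n, ((‖x t‖₊:ℝ≥0∞))^q)
        = ∫⁻ t in S n, ((‖f n t‖₊:ℝ≥0∞))^q := by
      apply lintegral_congr_ae
      filter_upwards [hae n] with t ht
      rw [ht]
    have hCfin : (Me^K * (2⁻¹:ℝ≥0∞)^n)^q ≠ ⊤ := by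
      apply ENNReal.rpow_ne_top_of_nonneg hq.le
      exact ENNReal.mul_ne_top (ENNReal.pow_ne_top hMetop) (ENNReal.pow_ne_top (by norm_num))
    have hb1 : (∫⁻ t in S n, ((‖f n t‖₊:ℝ≥0∞))^q)
        ≤ ∫⁻ t in S n, (Me^K * (2⁻¹:ℝ≥0∞)^n)^q * ((‖g (t - (n:ℝ)*a)‖₊:ℝ≥0∞))^q := by
      apply lintegral_mono_ae
      filter_upwards [ae_restrict_mem measurableSet_Ico] with t ht
      have hk := hkey n t ht.1
      calc ((‖f n t‖₊:ℝ≥0∞))^q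
          ≤ (Me^K * (2⁻¹:ℝ≥0∞)^n * ((‖g (t - (n:ℝ)*a)‖₊:ℝ≥0∞)))^q :=
            ENNReal.rpow_le_rpow hk hq.le
        _ = (Me^K * (2⁻¹:ℝ≥0∞)^n)^q * ((‖g (t - (n:ℝ)*a)‖₊:ℝ≥0∞))^q :=
            ENNReal.mul_rpow_of_nonneg _ _ hq.le
    calc (∫⁻ t in S n, ((‖x t‖₊:ℝ≥0∞))^q)
        ≤ (Me^K * (2⁻¹:ℝ≥0∞)^n)^q * ∫⁻ t in S n, ((‖g (t - (n:ℝ)*a)‖₊:ℝ≥0∞))^q := by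
          rw [he, ← lintegral_const_mul' _ _ hCfin]
          exact hb1
      _ = (Me^K * (2⁻¹:ℝ≥0∞)^n)^q * A := by rw [htrans n]
      _ = (((2⁻¹:ℝ≥0∞))^q)^n * ((Me^K)^q * A) := by
          rw [ENNReal.mul_rpow_of_nonneg _ _ hq.le,
            ← ENNReal.rpow_natCast (2⁻¹:ℝ≥0∞) n,
            ← ENNReal.rpow_natCast ((2⁻¹:ℝ≥0∞)^q) n,
            ← ENNReal.rpow_mul, ← ENNReal.rpow_mul, mul_comm q (n:ℝ), mul_assoc,
            mul_comm ((Me^K)^q) _, mul_assoc]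
          ring
  have hlint : (∫⁻ t in Ioi (0:ℝ), ((‖x t‖₊:ℝ≥0∞))^q) < ⊤ := by
    have h1 : (∫⁻ t in Ioi (0:ℝ), ((‖x t‖₊:ℝ≥0∞))^q)
        ≤ ∫⁻ t in ⋃ n : ℕ, S n, ((‖x t‖₊:ℝ≥0∞))^q := lintegral_mono_set hsub
    have hdisj : Pairwise (Function.onFun Disjoint S) := by
      intro m n hmn
      apply Set.disjoint_left.2
      intro t htm htn
      exact hmn ((aux_floor_eq a ha m t htm.1 htm.2).symm.trans
        (aux_floor_eq a ha n t htn.1 htn.2))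
    have h2 : (∫⁻ t in ⋃ n : ℕ, S n, ((‖x t‖₊:ℝ≥0∞))^q)
        = ∑' n : ℕ, ∫⁻ t in S n, ((‖x t‖₊:ℝ≥0∞))^q :=
      lintegral_iUnion (fun n => measurableSet_Ico) hdisj _
    have h3 := ENNReal.tsum_le_tsum hblock
    have h4 : (∑' n:ℕ, (((2⁻¹:ℝ≥0∞))^q)^n * ((Me^K)^q * A))
        = (1 - ((2⁻¹:ℝ≥0∞))^q)⁻¹ * ((Me^K)^q * A) := by
      rw [ENNReal.tsum_mul_right, ENNReal.tsum_geometric]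
    have hrlt : ((2⁻¹:ℝ≥0∞))^q < 1 := ENNReal.rpow_lt_one (by norm_num) hq
    have hfin : (1 - ((2⁻¹:ℝ≥0∞))^q)⁻¹ * ((Me^K)^q * A) < ⊤ := by
      apply ENNReal.mul_lt_top
      · rw [ENNReal.inv_lt_top]
        exact tsub_pos_of_lt hrlt
      · exact ENNReal.mul_lt_top
          (ENNReal.rpow_lt_top_of_nonneg hq.le (ENNReal.pow_ne_top hMetop))
          (lt_top_iff_ne_top.2 hAfin)
    calc (∫⁻ t in Ioi (0:ℝ), ((‖x t‖₊:ℝ≥0∞))^q)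
        ≤ ∑' n : ℕ, ∫⁻ t in S n, ((‖x t‖₊:ℝ≥0∞))^q := h1.trans_eq h2
      _ ≤ ∑' n:ℕ, (((2⁻¹:ℝ≥0∞))^q)^n * ((Me^K)^q * A) := h3
      _ = _ := h4
      _ < ⊤ := hfin
  have hmem : MemLp x p (volume.restrict (Ioi (0:ℝ))) := by
    refine ⟨hmeasx, ?_⟩
    rw [eLpNorm_lt_top_iff_lintegral_rpow_enorm_lt_top hp0 hp]
    exact hlint
  have haeeq : (fun t => w t * x (t + a)) =ᵐ[volume.restrict (Ioi (0:ℝ))]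
      fun t => l * x t := by
    filter_upwards [ae_restrict_mem measurableSet_Ioi] with t ht
    exact heig t (le_of_lt ht)
  exact ⟨hmem, hnz, MemLp.ae_eq haeeq.symm (hmem.const_mul l), haeeq⟩
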